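/- Let V be a finite-dimensional vector space over F_q, let P₁,…,P_s : V → F_q be homogeneous polynomial functions of degrees d₁,…,d_s ≥ 1, and set D := Σᵢ dᵢ. Assume dim V > D. Let Y ⊆ ℙ(V) be the set of points of projective space corresponding to the nonzero common zeros {v ∈ V ∖ {0} : Pᵢ(v) = 0 for all i}. Then |Y| ≥ |ℙ(V)| / (2 q^{D+1}). -/

import Mathlib

open Finset

open MvPolynomial

lemma aux_eval_smul {k : Type*} [CommSemiring k] {σ : Type*} {φ : MvPolynomial σ k} {n : ℕ}
    (h : φ.IsHomogeneous n) (c : k) (x : σ → k) :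
    eval (c • x) φ = c ^ n * eval x φ := by
  rw [eval_eq, eval_eq, Finset.mul_sum]
  refine Finset.sum_congr rfl fun d hd => ?_
  rw [MvPolynomial.mem_support_iff] at hd
  have hn : ∑ i ∈ d.support, d i = n := by
    have := h hd
    simpa [Finsupp.weight_apply, Finsupp.sum] using this
  have : ∏ i ∈ d.support, (c • x) i ^ d i = c ^ n * ∏ i ∈ d.support, x i ^ d i := by
    simp only [Pi.smul_apply, smul_eq_mul, mul_pow]
    rw [Finset.prod_mul_distrib, Finset.prod_pow_eq_pow_sum, hn]
  rw [this]; ring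

lemma aux_proj_card {k V : Type*} [Field k] [Fintype k] [AddCommGroup V] [Module k V]
    (S : Set V) (h0 : ∀ v ∈ S, v ≠ 0) (hS : ∀ (c : kˣ) (v : V), v ∈ S → (c : k) • v ∈ S) :
    Nat.card S = Nat.card {z : Projectivization k V // z.rep ∈ S} * (Fintype.card k - 1) := by
  have key : Nat.card ({z : Projectivization k V // z.rep ∈ S} × kˣ) = Nat.card S := by
    apply Nat.card_eq_of_bijective
      (f := fun p => (⟨(p.2 : k) • p.1.1.rep, hS p.2 _ p.1.2⟩ : S))
    constructor
    · rintro ⟨⟨z, hz⟩, c⟩ ⟨⟨z', hz'⟩, c'⟩ h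
      simp only [Subtype.mk.injEq] at h
      have hzz : z = z' := by
        have h1 : Projectivization.mk k ((c : k) • z.rep)
            (smul_ne_zero (Units.ne_zero c) z.rep_nonzero) = z := by
          conv_rhs => rw [← z.mk_rep]
          rw [Projectivization.mk_eq_mk_iff]
          exact ⟨c, rfl⟩
        have h2 : Projectivization.mk k ((c' : k) • z'.rep)
            (smul_ne_zero (Units.ne_zero c') z'.rep_nonzero) = z' := by
          conv_rhs => rw [← z'.mk_rep]
          rw [Projectivization.mk_eq_mk_iff]
          exact ⟨c', rfl⟩
        rw [← h1, ← h2]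
        congr 1
      subst hzz
      have : (c : k) = (c' : k) :=
        smul_left_injective k z.rep_nonzero h
      simp [Prod.ext_iff, Units.ext_iff, this]
    · rintro ⟨v, hv⟩
      obtain ⟨a, ha⟩ := Projectivization.exists_smul_eq_mk_rep k v (h0 v hv)
      have hrep : (Projectivization.mk k v (h0 v hv)).rep ∈ S := by
        rw [← ha, Units.smul_def]
        exact hS a v hv
      refine ⟨⟨⟨Projectivization.mk k v (h0 v hv), hrep⟩, a⁻¹⟩, ?_⟩
      ext
      simp only
      rw [← ha, Units.smul_def, ← smul_assoc, smul_eq_mul, Units.inv_mul, one_smul]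
  rw [Nat.card_prod, Nat.card_units, Nat.card_eq_fintype_card (α := k)] at key
  omega

lemma aux_exists_x {k : Type*} [Field k] [Fintype k] {N M s : ℕ}
    (dg : Fin s → ℕ) (hdg : ∀ i, 1 ≤ dg i)
    (P : Fin s → MvPolynomial (Fin N) k) (hP : ∀ i, (P i).IsHomogeneous (dg i))
    (hlt : (∑ i, dg i) < M) (B : Fin N → Fin M → k) :
    ∃ x : Fin M → k, x ≠ 0 ∧ ∀ i, eval (fun n => ∑ m, B n m * x m) (P i) = 0 := by
  classical
  set g : Fin N → MvPolynomial (Fin M) k := fun n => ∑ m, C (B n m) * X m with hg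
  have hghom : ∀ n, (g n).IsHomogeneous 1 :=
    fun n => MvPolynomial.IsHomogeneous.sum _ _ _
      (fun m _ => by simpa using isHomogeneous_C_mul_X_pow (B n m) m 1)
  set Q : Fin s → MvPolynomial (Fin M) k := fun i => aeval g (P i) with hQ
  have hQhom : ∀ i, (Q i).IsHomogeneous (dg i) := fun i => by
    simpa [hQ] using (hP i).aeval g hghom
  have hQeval : ∀ (x : Fin M → k) i,
      eval x (Q i) = eval (fun n => ∑ m, B n m * x m) (P i) := by
    intro x i
    have h1 : eval x (Q i) = aeval x (Q i) := by rw [aeval_def]; rfl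
    have h2 : (fun n => ∑ m, B n m * x m) = fun n => aeval x (g n) := by
      funext n; simp [hg]
    rw [h1]
    show aeval x (aeval g (P i)) = _
    rw [aeval_eq_bind₁ g, aeval_bind₁, h2]
    rw [aeval_def]; rfl
  have htd : (∑ i, (Q i).totalDegree) < Fintype.card (Fin M) := by
    rw [Fintype.card_fin]
    exact lt_of_le_of_lt (Finset.sum_le_sum fun i _ => (hQhom i).totalDegree_le) hlt
  obtain ⟨p, hp⟩ := CharP.exists k
  haveI := hp
  have hprime : p.Prime := CharP.char_is_prime k p
  have hdvd := char_dvd_card_solutions_of_fintype_sum_lt (K := k) p htd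
  rw [Fintype.card_eq_nat_card] at hdvd
  have hzero : ∀ i, eval (0 : Fin M → k) (Q i) = 0 := by
    intro i
    have hc : coeff 0 (Q i) = 0 := by
      apply (hQhom i).coeff_eq_zero
      have := hdg i
      simp only [map_zero]
      omega
    rw [show (0 : Fin M → k) = fun _ => (0 : k) from rfl]
    rw [eval_eq]
    apply Finset.sum_eq_zero
    intro d hd
    rcases eq_or_ne d 0 with rfl | hdne
    · simp [hc]
    · obtain ⟨j, hj⟩ := Finsupp.ne_iff.mp hdne
      simp only [Finsupp.coe_zero, Pi.zero_apply] at hj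
      have hmem : j ∈ d.support := Finsupp.mem_support_iff.mpr hj
      rw [Finset.prod_eq_zero hmem (by simp [zero_pow hj])]
      ring
  have hcard1 : 0 < Nat.card { x : Fin M → k // ∀ i, eval x (Q i) = 0 } := by
    rw [Nat.card_eq_fintype_card]
    exact Fintype.card_pos_iff.mpr ⟨⟨0, hzero⟩⟩
  have hcard2 : 2 ≤ Nat.card { x : Fin M → k // ∀ i, eval x (Q i) = 0 } :=
    hprime.two_le.trans (Nat.le_of_dvd hcard1 hdvd)
  rw [Nat.card_eq_fintype_card] at hcard2
  obtain ⟨y, hy⟩ := Fintype.exists_ne_of_one_lt_card (by omega) (⟨0, hzero⟩ :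
    { x : Fin M → k // ∀ i, eval x (Q i) = 0 })
  refine ⟨y.1, fun h => hy (Subtype.ext h), fun i => ?_⟩
  rw [← hQeval]
  exact y.2 i

lemma aux_core {k : Type*} [Field k] [Fintype k] {N M s : ℕ}
    (dg : Fin s → ℕ) (hdg : ∀ i, 1 ≤ dg i)
    (P : Fin s → MvPolynomial (Fin N) k) (hP : ∀ i, (P i).IsHomogeneous (dg i))
    (hlt : (∑ i, dg i) < M) :
    Fintype.card k ^ N ≤
      Nat.card {v : Fin N → k // ∀ i, eval v (P i) = 0} * (Fintype.card k ^ M - 1) := by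
  classical
  set q := Fintype.card k with hq
  set L : (Fin M → k) → (Fin N → Fin M → k) → (Fin N → k) :=
    fun x B n => ∑ m, B n m * x m with hL
  set T : Finset ((Fin N → Fin M → k) × (Fin M → k)) :=
    univ.filter fun Bx => Bx.2 ≠ 0 ∧ ∀ i, eval (L Bx.2 Bx.1) (P i) = 0 with hT
  have hdomcard : Fintype.card (Fin N → Fin M → k) = q ^ (M * N) := by
    rw [Fintype.card_fun, Fintype.card_fun, Fintype.card_fin, Fintype.card_fin, ← pow_mul,
      Nat.mul_comm]
  have hcodcard : Fintype.card (Fin N → k) = q ^ N := by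
    rw [Fintype.card_fun, Fintype.card_fin]
  -- lower bound on T.card
  have hTlb : q ^ (M * N) ≤ T.card := by
    rw [← hdomcard, ← Finset.card_univ]
    apply Finset.card_le_card_of_injOn
      (fun B => (B, Classical.choose (aux_exists_x dg hdg P hP hlt B)))
    · intro B _
      have hspec := Classical.choose_spec (aux_exists_x dg hdg P hP hlt B)
      simp only [hT, Finset.mem_coe, Finset.mem_filter, Finset.mem_univ, true_and]
      exact ⟨hspec.1, hspec.2⟩
    · intro a _ b _ h
      exact congrArg Prod.fst h
  -- equal fibers
  have hfiber : ∀ x : Fin M → k, x ≠ 0 → ∀ v w : Fin N → k,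
      (univ.filter fun B => L x B = v).card = (univ.filter fun B => L x B = w).card := by
    intro x hx v w
    obtain ⟨m₀, hm₀⟩ := Function.ne_iff.mp hx
    simp only [Pi.zero_apply] at hm₀
    set B₀ : Fin N → Fin M → k := fun n m => if m = m₀ then (w n - v n) / x m₀ else 0 with hB₀
    have hLB₀ : ∀ n, L x B₀ n = w n - v n := by
      intro n
      simp only [hL, hB₀]
      rw [Finset.sum_eq_single m₀]
      · rw [if_pos rfl, div_mul_cancel₀ _ hm₀]
      · intro b _ hb; rw [if_neg hb, zero_mul]
      · intro h; exact absurd (mem_univ m₀) h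
    have hadd : ∀ (B : Fin N → Fin M → k) n, L x (B + B₀) n = L x B n + L x B₀ n := by
      intro B n; simp [hL, add_mul, Finset.sum_add_distrib]
    apply Finset.card_bij' (fun B _ => B + B₀) (fun B _ => B - B₀)
    · intro B hB
      simp only [Finset.mem_filter, Finset.mem_univ, true_and] at hB ⊢
      funext n
      rw [hadd, hB, hLB₀]
      ring
    · intro B hB
      simp only [Finset.mem_filter, Finset.mem_univ, true_and] at hB ⊢
      funext n
      have : L x ((B - B₀) + B₀) n = L x (B - B₀) n + L x B₀ n := hadd _ n
      rw [sub_add_cancel] at this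
      rw [← sub_eq_iff_eq_add] at this
      rw [← this, hB, hLB₀]
      ring
    · intro B _; rw [add_sub_cancel_right]
    · intro B _; rw [sub_add_cancel]
  -- q^(M*N) = q^N * fiber₀
  have hsum : ∀ x : Fin M → k, x ≠ 0 →
      q ^ (M * N) = q ^ N * (univ.filter fun B => L x B = 0).card := by
    intro x hx
    have h1 := Finset.card_eq_sum_card_fiberwise
      (s := (univ : Finset (Fin N → Fin M → k))) (t := univ) (f := L x)
      (fun a _ => mem_univ _)
    rw [Finset.card_univ, hdomcard] at h1
    rw [h1, Finset.sum_congr rfl (fun v _ => hfiber x hx v 0), Finset.sum_const,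
      Finset.card_univ, hcodcard, smul_eq_mul]
  -- Z cardinality
  set Zf : Finset (Fin N → k) := univ.filter (fun v => ∀ i, eval v (P i) = 0) with hZf
  have hZc : Nat.card {v : Fin N → k // ∀ i, eval v (P i) = 0} = Zf.card := by
    rw [Nat.card_eq_fintype_card, Fintype.card_subtype]
  -- fiber over fixed x within T
  have hfibZ : ∀ x : Fin M → k, x ≠ 0 →
      (univ.filter fun B => ∀ i, eval (L x B) (P i) = 0).card * q ^ N
        = Zf.card * q ^ (M * N) := by
    intro x hx
    have h1 : (univ.filter fun B => ∀ i, eval (L x B) (P i) = 0).card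
        = ∑ v ∈ Zf, ((univ.filter fun B => ∀ i, eval (L x B) (P i) = 0).filter
            fun B => L x B = v).card := by
      apply Finset.card_eq_sum_card_fiberwise
      intro B hB
      simp only [Finset.mem_coe, Finset.mem_filter, Finset.mem_univ, true_and] at hB
      simp only [hZf, Finset.mem_coe, Finset.mem_filter, Finset.mem_univ, true_and]
      exact hB
    have h2 : ∀ v ∈ Zf, ((univ.filter fun B => ∀ i, eval (L x B) (P i) = 0).filter
        fun B => L x B = v) = univ.filter fun B => L x B = v := by
      intro v hv
      simp only [hZf, Finset.mem_filter, Finset.mem_univ, true_and] at hv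
      ext B
      simp only [Finset.mem_filter, Finset.mem_univ, true_and, and_iff_right_iff_imp]
      intro hB i
      rw [hB]; exact hv i
    rw [h1, Finset.sum_congr rfl (fun v hv => by rw [h2 v hv])]
    rw [Finset.sum_congr rfl (fun v _ => hfiber x hx v 0), Finset.sum_const, smul_eq_mul,
      hsum x hx]
    ring
  -- T.card * q^N
  have hTcard : T.card * q ^ N = (q ^ M - 1) * (Zf.card * q ^ (M * N)) := by
    have h1 : T.card = ∑ x ∈ univ.filter (fun x : Fin M → k => x ≠ 0),
        (T.filter fun Bx => Bx.2 = x).card := by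
      apply Finset.card_eq_sum_card_fiberwise (f := Prod.snd)
      intro a ha
      simp only [hT, Finset.mem_coe, Finset.mem_filter, Finset.mem_univ, true_and] at ha ⊢
      exact ha.1
    have h2 : ∀ x : Fin M → k, x ≠ 0 → (T.filter fun Bx => Bx.2 = x).card
        = (univ.filter fun B => ∀ i, eval (L x B) (P i) = 0).card := by
      intro x hx
      apply Finset.card_nbij' (i := Prod.fst) (j := fun B => (B, x))
      · rintro ⟨B, y⟩ hBy
        simp only [hT, Finset.mem_coe, Finset.mem_filter, Finset.mem_univ, true_and] at hBy ⊢
        obtain ⟨⟨-, h⟩, rfl⟩ := hBy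
        exact h
      · intro B hB
        simp only [hT, Finset.mem_coe, Finset.mem_filter, Finset.mem_univ, true_and] at hB ⊢
        refine ⟨⟨hx, hB⟩, trivial⟩
      · rintro ⟨B, y⟩ hBy
        simp only [hT, Finset.mem_coe, Finset.mem_filter] at hBy
        obtain ⟨-, rfl⟩ := hBy
        rfl
      · intro B _
        rfl
    have hne : (univ.filter (fun x : Fin M → k => x ≠ 0)).card = q ^ M - 1 := by
      rw [Finset.filter_ne', Finset.card_erase_of_mem (mem_univ _), Finset.card_univ,
        Fintype.card_fun, Fintype.card_fin]
    rw [h1, Finset.sum_mul]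
    rw [Finset.sum_congr rfl (fun x hx => by
      rw [h2 x (by simpa using (Finset.mem_filter.mp hx).2),
        hfibZ x (by simpa using (Finset.mem_filter.mp hx).2)])]
    rw [Finset.sum_const, smul_eq_mul, hne]
  -- combine
  have hfinal : q ^ (M * N) * q ^ N ≤ (q ^ M - 1) * (Zf.card * q ^ (M * N)) := by
    rw [← hTcard]
    exact Nat.mul_le_mul_right _ hTlb
  have hqpos : 0 < q ^ (M * N) := by
    have : 0 < q := Fintype.card_pos
    positivity
  rw [hZc]
  have : q ^ N * q ^ (M * N) ≤ (Zf.card * (q ^ M - 1)) * q ^ (M * N) := by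
    calc q ^ N * q ^ (M * N) = q ^ (M * N) * q ^ N := by ring
    _ ≤ (q ^ M - 1) * (Zf.card * q ^ (M * N)) := hfinal
    _ = (Zf.card * (q ^ M - 1)) * q ^ (M * N) := by ring
  exact Nat.le_of_mul_le_mul_right this hqpos

lemma aux_eval_zero {k : Type*} [CommSemiring k] {σ : Type*} {φ : MvPolynomial σ k} {n : ℕ}
    (h : φ.IsHomogeneous n) (hn : n ≠ 0) : eval (0 : σ → k) φ = 0 := by
  have h1 := aux_eval_smul h (0 : k) (0 : σ → k)
  rw [smul_zero, zero_pow hn, zero_mul] at h1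
  exact h1

/-- Let `V = F_q^N`, let `P₁,…,P_s` be homogeneous polynomials of degrees
`d₁,…,d_s ≥ 1` with `D := Σᵢ dᵢ < N = dim V`, and let `Y ⊆ ℙ(V)` be the projectivized set
of common nonzero zeros of the `Pᵢ` (a point of `ℙ(V)` is a zero iff any, equivalently
every, representative vector is, by homogeneity).  Then `|Y| ≥ |ℙ(V)| / (2 q^{D+1})`. -/
theorem stmt18 (k : Type*) [Field k] [Fintype k] (N s : ℕ)
    (dg : Fin s → ℕ) (hdg : ∀ i, 1 ≤ dg i)
    (P : Fin s → MvPolynomial (Fin N) k)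
    (hP : ∀ i, (P i).IsHomogeneous (dg i))
    (hdim : (∑ i, dg i) < N) :
    (Nat.card (Projectivization k (Fin N → k)) : ℝ) /
        (2 * (Fintype.card k : ℝ) ^ ((∑ i, dg i) + 1)) ≤
      (Set.ncard
        {z : Projectivization k (Fin N → k) |
          ∀ i, MvPolynomial.eval z.rep (P i) = 0} : ℝ) := by
  classical
  set q := Fintype.card k with hq
  set D := ∑ i, dg i with hD
  set M := D + 1 with hM
  have hq2 : 2 ≤ q := Fintype.one_lt_card
  have hMN : M ≤ N := by omega
  -- core bound
  have hcore : q ^ N ≤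
      Nat.card {v : Fin N → k // ∀ i, eval v (P i) = 0} * (q ^ M - 1) :=
    aux_core dg hdg P hP (by omega)
  -- zero is a common zero
  have h0Z : ∀ i, eval (0 : Fin N → k) (P i) = 0 := fun i =>
    aux_eval_zero (hP i) (by have := hdg i; omega)
  -- sets
  set S₁ : Set (Fin N → k) := {v | v ≠ 0 ∧ ∀ i, eval v (P i) = 0} with hS₁
  set S₂ : Set (Fin N → k) := {v | v ≠ 0} with hS₂
  -- projectivization counts
  have hpc1 : Nat.card S₁ =
      Nat.card {z : Projectivization k (Fin N → k) // z.rep ∈ S₁} * (q - 1) := by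
    apply aux_proj_card
    · exact fun v hv => hv.1
    · rintro c v ⟨hv0, hv⟩
      refine ⟨smul_ne_zero (Units.ne_zero c) hv0, fun i => ?_⟩
      rw [aux_eval_smul (hP i), hv i, mul_zero]
  have hpc2 : Nat.card S₂ =
      Nat.card {z : Projectivization k (Fin N → k) // z.rep ∈ S₂} * (q - 1) := by
    apply aux_proj_card
    · exact fun v hv => hv
    · exact fun c v hv => smul_ne_zero (Units.ne_zero c) hv
  -- identify with Y and ℙ
  set Yn := Set.ncard {z : Projectivization k (Fin N → k) |
      ∀ i, MvPolynomial.eval z.rep (P i) = 0} with hYn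
  have hY : Nat.card {z : Projectivization k (Fin N → k) // z.rep ∈ S₁} = Yn := by
    rw [hYn, ← Nat.card_coe_set_eq]
    apply Nat.card_congr
    apply Equiv.subtypeEquivRight
    intro z
    simp only [hS₁, Set.mem_setOf_eq, and_iff_right_iff_imp]
    exact fun _ => z.rep_nonzero
  have hA : Nat.card {z : Projectivization k (Fin N → k) // z.rep ∈ S₂} =
      Nat.card (Projectivization k (Fin N → k)) := by
    apply Nat.card_congr
    exact Equiv.subtypeUnivEquiv (fun z => z.rep_nonzero)
  -- cardinalities of S₁ and S₂
  have hcard1 : Nat.card S₁ + 1 = Nat.card {v : Fin N → k // ∀ i, eval v (P i) = 0} := by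
    have e : S₁ ≃ {v : Fin N → k // v ≠ 0 ∧ ∀ i, eval v (P i) = 0} :=
      Equiv.subtypeEquivRight (fun v => Iff.rfl)
    rw [Nat.card_congr e, Nat.card_eq_fintype_card, Nat.card_eq_fintype_card,
      Fintype.card_subtype, Fintype.card_subtype]
    have hfe : univ.filter (fun v : Fin N → k => v ≠ 0 ∧ ∀ i, eval v (P i) = 0)
        = (univ.filter fun v : Fin N → k => ∀ i, eval v (P i) = 0).erase 0 := by
      ext v
      simp only [Finset.mem_filter, Finset.mem_univ, true_and, Finset.mem_erase, and_comm]
    have hmem : (0 : Fin N → k) ∈ univ.filter fun v : Fin N → k => ∀ i, eval v (P i) = 0 := by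
      simp only [Finset.mem_filter, Finset.mem_univ, true_and]
      exact h0Z
    have hpos : 0 < (univ.filter fun v : Fin N → k => ∀ i, eval v (P i) = 0).card :=
      Finset.card_pos.mpr ⟨0, hmem⟩
    rw [hfe, Finset.card_erase_of_mem hmem]
    omega
  have hcard2 : Nat.card S₂ + 1 = q ^ N := by
    have e : S₂ ≃ {v : Fin N → k // v ≠ 0} := Equiv.subtypeEquivRight (fun v => Iff.rfl)
    rw [Nat.card_congr e, Nat.card_eq_fintype_card, Fintype.card_subtype]
    have hfe : univ.filter (fun v : Fin N → k => v ≠ 0) = univ.erase 0 :=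
      Finset.filter_ne' _ _
    have hcu : (univ : Finset (Fin N → k)).card = q ^ N := by
      rw [Finset.card_univ, Fintype.card_fun, Fintype.card_fin]
    have hpos : 0 < (univ : Finset (Fin N → k)).card :=
      Finset.card_pos.mpr ⟨0, mem_univ _⟩
    rw [hfe, Finset.card_erase_of_mem (mem_univ _)]
    omega
  -- natural number facts
  set Zc := Nat.card {v : Fin N → k // ∀ i, eval v (P i) = 0} with hZc
  set An := Nat.card (Projectivization k (Fin N → k)) with hAn
  have hf1 : Yn * (q - 1) + 1 = Zc := by rw [← hcard1, hpc1, hY]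
  have hf2 : An * (q - 1) + 1 = q ^ N := by rw [← hcard2, hpc2, hA]
  -- pass to real numbers
  have hq1R : (1 : ℝ) < (q : ℝ) := by exact_mod_cast hq2
  have hqM1 : 1 ≤ q ^ M := Nat.one_le_pow _ _ (by omega)
  have hcoreR : ((q : ℝ)) ^ N ≤ (Zc : ℝ) * ((q : ℝ) ^ M - 1) := by
    have := hcore
    have h' : (q : ℝ) ^ N ≤ (Zc : ℝ) * ((q ^ M - 1 : ℕ) : ℝ) := by exact_mod_cast this
    rwa [Nat.cast_sub hqM1, Nat.cast_pow, Nat.cast_one] at h'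
  have hf1R : (Yn : ℝ) * ((q : ℝ) - 1) + 1 = (Zc : ℝ) := by
    have : ((Yn * (q - 1) + 1 : ℕ) : ℝ) = (Zc : ℝ) := by exact_mod_cast hf1
    push_cast [Nat.cast_sub (by omega : 1 ≤ q)] at this
    linarith [this]
  have hf2R : (An : ℝ) * ((q : ℝ) - 1) + 1 = (q : ℝ) ^ N := by
    have : ((An * (q - 1) + 1 : ℕ) : ℝ) = ((q ^ N : ℕ) : ℝ) := by exact_mod_cast hf2
    push_cast [Nat.cast_sub (by omega : 1 ≤ q)] at this
    linarith [this]
  -- the key inequality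
  set ar : ℝ := (q : ℝ) ^ M with har
  set br : ℝ := (q : ℝ) ^ N with hbr
  have har2 : (2 : ℝ) ≤ ar := by
    calc (2 : ℝ) ≤ (q : ℝ) := by exact_mod_cast hq2
    _ ≤ (q : ℝ) ^ M := by
        apply le_self_pow₀ (by linarith) (by omega)
  have hkey : br - 1 ≤ 2 * ar * ((Zc : ℝ) - 1) := by
    rcases eq_or_lt_of_le hMN with hMeq | hMlt
    · -- N = M
      have hZc2 : 2 ≤ Zc := by
        by_contra hcon
        push_neg at hcon
        interval_cases Zc
        · rw [zero_mul] at hcore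
          have hqN : 0 < q ^ N := pow_pos (by omega : 0 < q) N
          omega
        · rw [one_mul] at hcore
          have hqM : 2 ≤ q ^ M := by
            calc 2 ≤ q := hq2
            _ ≤ q ^ M := Nat.le_self_pow (by omega) q
          rw [← hMeq] at hcore
          omega
      have hZcR : (2 : ℝ) ≤ (Zc : ℝ) := by exact_mod_cast hZc2
      have hab : br = ar := by rw [har, hbr, hMeq]
      nlinarith
    · -- M < N
      have hba : 2 * ar ≤ br := by
        have hnat : 2 * q ^ M ≤ q ^ N := by
          calc 2 * q ^ M ≤ q * q ^ M := Nat.mul_le_mul_right _ hq2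
          _ = q ^ (M + 1) := by ring
          _ ≤ q ^ N := Nat.pow_le_pow_right (by omega) (by omega)
        calc 2 * ar = ((2 * q ^ M : ℕ) : ℝ) := by push_cast; ring
        _ ≤ ((q ^ N : ℕ) : ℝ) := by exact_mod_cast hnat
        _ = br := by push_cast; ring
      have hZc1 : (1 : ℝ) ≤ (Zc : ℝ) := by
        have : 1 ≤ Zc := by omega
        exact_mod_cast this
      nlinarith [hcoreR, hba, har2, hZc1]
  -- conclude
  rw [div_le_iff₀ (by positivity)]
  have hq1pos : (0 : ℝ) < (q : ℝ) - 1 := by linarith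
  rw [← mul_le_mul_iff_of_pos_right hq1pos]
  calc (An : ℝ) * ((q : ℝ) - 1) = br - 1 := by linarith [hf2R]
  _ ≤ 2 * ar * ((Zc : ℝ) - 1) := hkey
  _ = 2 * ar * ((Yn : ℝ) * ((q : ℝ) - 1)) := by rw [← hf1R]; ring
  _ = (Yn : ℝ) * (2 * ar) * ((q : ℝ) - 1) := by ring
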